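/- Let S be a compact positive operator and A a bounded self-adjoint operator on a complex Hilbert space H, set K := S ∘ A (so K* = A ∘ S), and let (λ_n, f_n, g_n) be eigen-data satisfying the completeness hypothesis. Then for every f ∈ H, one has K* f = 0 if and only if ⟨f, g_n⟩ = 0 for all n ∈ ℕ. (Equivalently, the function z ↦ (I − z K*)^{-1} f extends to an entire function of z if and only if f ∈ ker K*, in which case (I − z K*)^{-1} f = f.) -/

import Mathlib

open ContinuousLinearMap Filter Topology Finset

/-- For `K = S ∘ A` (`S` compact positive, `A` bounded self-adjoint) with eigen-data
`(λ_n, f_n, g_n)` satisfying the completeness hypothesis: `K* f = 0` if and only if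
`⟨f, g_n⟩ = 0` for all `n`. -/
theorem stmt15
    {H : Type*} [NormedAddCommGroup H] [InnerProductSpace ℂ H] [CompleteSpace H]
    (S A : H →L[ℂ] H)
    (hS_sa : IsSelfAdjoint S)
    (hS_pos : ∀ x : H, x ≠ 0 → 0 < (inner ℂ (S x) x : ℂ).re)
    (hS_compact : IsCompactOperator (⇑S))
    (hA_sa : IsSelfAdjoint A)
    -- `R` is the positive square root of `S`
    (R : H →L[ℂ] H)
    (hR_sa : IsSelfAdjoint R)
    (hR_pos : ∀ x : H, 0 ≤ (inner ℂ (R x) x : ℂ).re)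
    (hR_sq : R ∘L R = S)
    -- eigen-data
    (lam : ℕ → ℝ) (hlam : ∀ n, lam n ≠ 0)
    (f : ℕ → H) (hf : ∀ n, adjoint (S ∘L A) (f n) = (lam n : ℂ) • f n)
    (g : ℕ → H) (hg : ∀ n, g n = S (f n))
    (horth : Orthonormal ℂ (fun n => R (f n)))
    (hcomplete : ∀ x : H, R (adjoint (S ∘L A) x) ∈
      (Submodule.span ℂ (Set.range fun n => R (f n))).topologicalClosure) :
    ∀ x : H, adjoint (S ∘L A) x = 0 ↔ ∀ n, (inner ℂ (g n) x : ℂ) = 0 := by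
  have hadj : ∀ u v : H, (inner ℂ u (adjoint (S ∘L A) v) : ℂ) = inner ℂ ((S ∘L A) u) v := by
    intro u v; rw [adjoint_inner_right]
  have hK : ∀ n : ℕ, (S ∘L A) (g n) = (lam n : ℂ) • g n := by
    intro n
    have h1 : (S ∘L A) (g n) = S ((A ∘L S) (f n)) := by simp [hg]
    have h2 : (A ∘L S) (f n) = adjoint (S ∘L A) (f n) := by
      rw [adjoint_comp, hA_sa.adjoint_eq, hS_sa.adjoint_eq]
    rw [h1, h2, hf, map_smul, hg]
  intro x
  constructor
  · intro hx n
    have h0 : (inner ℂ (g n) (adjoint (S ∘L A) x) : ℂ) = 0 := by rw [hx, inner_zero_right]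
    rw [hadj, hK, inner_smul_left] at h0
    have : (starRingEnd ℂ) (lam n : ℂ) ≠ 0 := by
      simp [Complex.conj_ofReal, hlam n]
    exact (mul_eq_zero.mp h0).resolve_left this
  · intro hgx
    set y := adjoint (S ∘L A) x with hy
    -- R x is orthogonal to the span
    have hRx : R x ∈ (Submodule.span ℂ (Set.range fun n => R (f n)))ᗮ := by
      rw [Submodule.mem_orthogonal]
      intro u hu
      induction hu using Submodule.span_induction with
      | mem v hv =>
        obtain ⟨n, rfl⟩ := hv
        have h1 : (inner ℂ (R (f n)) (R x) : ℂ) = inner ℂ (R (R (f n))) x := by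
          have := ContinuousLinearMap.adjoint_inner_left R x (R (f n))
          rw [hR_sa.adjoint_eq] at this
          exact this.symm
        have h2 : R (R (f n)) = S (f n) := by
          have := congrArg (fun T : H →L[ℂ] H => T (f n)) hR_sq
          simpa using this
        rw [h1, h2, ← hg]
        exact hgx n
      | zero => simp
      | add _ _ _ _ h1 h2 => rw [inner_add_left, h1, h2, add_zero]
      | smul c _ _ h1 => rw [inner_smul_left, h1, mul_zero]
    -- key: ⟨R x, R (K* y)⟩ = 0
    have hmem : R (adjoint (S ∘L A) y) ∈
        ((Submodule.span ℂ (Set.range fun n => R (f n)))ᗮ)ᗮ := by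
      rw [Submodule.orthogonal_orthogonal_eq_closure]
      exact hcomplete y
    have hkey : (inner ℂ (R x) (R (adjoint (S ∘L A) y)) : ℂ) = 0 :=
      (Submodule.mem_orthogonal _ _).mp hmem (R x) hRx
    -- rewrite: ⟨R x, R (K* y)⟩ = ⟨y, S y⟩
    have hchain : (inner ℂ (R x) (R (adjoint (S ∘L A) y)) : ℂ) = inner ℂ y (S y) := by
      have e1 : (inner ℂ (R x) (R (adjoint (S ∘L A) y)) : ℂ)
          = inner ℂ x (R (R (adjoint (S ∘L A) y))) := by
        have := ContinuousLinearMap.adjoint_inner_right R x (R (adjoint (S ∘L A) y))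
        rw [hR_sa.adjoint_eq] at this
        exact this.symm
      have e2 : R (R (adjoint (S ∘L A) y)) = S (adjoint (S ∘L A) y) := by
        have := congrArg (fun T : H →L[ℂ] H => T (adjoint (S ∘L A) y)) hR_sq
        simpa using this
      have e3 : S (adjoint (S ∘L A) y) = (S ∘L A) (S y) := by
        have h2 : adjoint (S ∘L A) y = (A ∘L S) y := by
          simp [adjoint_comp, hA_sa.adjoint_eq, hS_sa.adjoint_eq]
        simp [h2, hA_sa.adjoint_eq, hS_sa.adjoint_eq]
      rw [e1, e2, e3, ← adjoint_inner_left, ← hy]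
    -- conclude y = 0
    rw [hchain] at hkey
    by_contra hne
    have hpos := hS_pos y hne
    have : (inner ℂ (S y) y : ℂ).re = 0 := by
      rw [← inner_conj_symm, hkey]; simp
    rw [this] at hpos
    exact lt_irrefl 0 hpos
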